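/- Let l ≥ 1 and k ≥ 0 be integers, let s < 0 be real, and let p : ℝ → ℝ be l times continuously differentiable on [0, ∞). Assume there is an open neighborhood U of s such that for every 0 ≤ j ≤ l and every 0 ≤ i ≤ k: the function t ↦ t^i e^{σ t} p^{(j)}(t) is integrable on (0, ∞) for every σ ∈ U, and e^{σ t} t^i p^{(j)}(t) → 0 as t → ∞ for every σ ∈ U. Define M(σ) = ∫_0^∞ e^{σ t} p(t) dt for σ ∈ U. Then ∫_0^∞ e^{s t} t^k p^{(l)}(t) dt = (−1)^l · d^k/dσ^k [σ^l M(σ)]|_{σ = s} + Σ_{m=k+1}^{l} (−1)^m p^{(l−m)}(0) · ((m−1)!/(m−k−1)!) · s^{m−k−1}, where the sum is empty when l ≤ k. -/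

import Mathlib

open MeasureTheory Filter

/-- iterated derivative only depends on the germ near the point. -/
lemma my_iteratedDeriv_congr_nhds {f g : ℝ → ℝ} {x : ℝ} (h : f =ᶠ[nhds x] g) (n : ℕ) :
    iteratedDeriv n f x = iteratedDeriv n g x := by
  rw [iteratedDeriv, iteratedDeriv, ← iteratedFDerivWithin_univ, ← iteratedFDerivWithin_univ]
  congr 1
  exact Filter.EventuallyEq.iteratedFDerivWithin_eq
    (by simpa [nhdsWithin_univ] using h) h.eq_of_nhds n

lemma my_chain (U : Set ℝ) (hU : IsOpen U) :
    ∀ (k : ℕ) (G : ℕ → ℝ → ℝ),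
      (∀ i < k, ∀ σ ∈ U, HasDerivAt (G i) (G (i + 1) σ) σ) →
      ∀ s ∈ U, iteratedDeriv k (G 0) s = G k s := by
  intro k
  induction k with
  | zero => intro G _ s _; simp [iteratedDeriv_zero]
  | succ k ih =>
    intro G h s hsU
    rw [iteratedDeriv_succ']
    have h1 : iteratedDeriv k (deriv (G 0)) s = iteratedDeriv k (G 1) s := by
      apply my_iteratedDeriv_congr_nhds
      filter_upwards [hU.mem_nhds hsU] with σ hσ
      exact (h 0 (Nat.succ_pos k) σ hσ).deriv
    rw [h1]
    exact ih (fun i => G (i + 1)) (fun i hi σ hσ => h (i + 1) (Nat.succ_lt_succ hi) σ hσ) s hsU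

noncomputable def Dfun (i n : ℕ) (σ : ℝ) : ℝ :=
  if i ≤ n then ((n.factorial : ℝ) / ((n - i).factorial : ℝ)) * σ ^ (n - i) else 0

lemma Dfun_hasDerivAt (i n : ℕ) (σ : ℝ) : HasDerivAt (fun τ => Dfun i n τ) (Dfun (i + 1) n σ) σ := by
  by_cases h1 : i + 1 ≤ n
  · have h0 : i ≤ n := Nat.le_of_succ_le h1
    have he : (fun τ => Dfun i n τ)
        = fun τ => ((n.factorial : ℝ) / ((n - i).factorial : ℝ)) * τ ^ (n - i) := by
      funext τ; simp [Dfun, h0]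
    rw [he]
    have hd := (hasDerivAt_pow (n - i) σ).const_mul ((n.factorial : ℝ) / ((n - i).factorial : ℝ))
    refine hd.congr_deriv ?_
    symm
    have hfac : (((n - i : ℕ)) : ℝ) * ((n - i - 1).factorial : ℝ) = ((n - i).factorial : ℝ) := by
      exact_mod_cast congrArg (Nat.cast (R := ℝ)) (Nat.mul_factorial_pred (show n - i ≠ 0 by omega))
    have hne : ((n - i - 1).factorial : ℝ) ≠ 0 := Nat.cast_ne_zero.mpr (Nat.factorial_ne_zero _)
    have hnz : (((n - i : ℕ)) : ℝ) ≠ 0 := Nat.cast_ne_zero.mpr (by omega)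
    simp only [Dfun, if_pos h1]
    rw [show n - (i + 1) = n - i - 1 from by omega]
    rw [← hfac, div_mul_eq_mul_div, div_mul_eq_mul_div,
      div_eq_div_iff hne (mul_ne_zero hnz hne)]
    ring
  · by_cases h0 : i ≤ n
    · have hin : i = n := by omega
      subst hin
      have he : (fun τ => Dfun i i τ) = fun _ => ((i.factorial : ℝ)) := by
        funext τ; simp [Dfun]
      have he2 : Dfun (i + 1) i σ = 0 := by simp [Dfun, h1]
      rw [he, he2]
      exact hasDerivAt_const σ _
    · have he : (fun τ => Dfun i n τ) = fun _ => (0 : ℝ) := by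
        funext τ; simp [Dfun, h0]
      have he2 : Dfun (i + 1) n σ = 0 := by simp [Dfun, h1]
      rw [he, he2]
      exact hasDerivAt_const σ _

lemma Dfun_zero (m : ℕ) (σ : ℝ) : Dfun 0 m σ = σ ^ m := by
  simp [Dfun, div_self (Nat.cast_ne_zero.mpr (Nat.factorial_ne_zero m) : ((m.factorial : ℝ)) ≠ 0)]

/-- Laplace-transform rule: for `p` `l`-times continuously differentiable on `[0,∞)`,
with suitable integrability and decay near `+∞` in a neighborhood `U` of `s < 0`, and
`M(σ) = ∫_0^∞ e^{σt} p(t) dt` on `U`,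
`∫_0^∞ e^{st} t^k p^{(l)}(t) dt = (−1)^l d^k/dσ^k [σ^l M(σ)]|_{σ=s}
  + Σ_{m=k+1}^{l} (−1)^m p^{(l−m)}(0) ((m−1)!/(m−k−1)!) s^{m−k−1}`. -/
theorem stmt6 (l k : ℕ) (hl : 1 ≤ l) (s : ℝ) (hs : s < 0) (p : ℝ → ℝ)
    (hp : ContDiffOn ℝ l p (Set.Ici 0))
    (U : Set ℝ) (hU : IsOpen U) (hsU : s ∈ U)
    (hint : ∀ j ≤ l, ∀ i ≤ k, ∀ σ ∈ U,
      IntegrableOn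
        (fun t => t ^ i * Real.exp (σ * t) * iteratedDerivWithin j p (Set.Ici 0) t)
        (Set.Ioi 0))
    (hlim : ∀ j ≤ l, ∀ i ≤ k, ∀ σ ∈ U,
      Tendsto (fun t => Real.exp (σ * t) * t ^ i * iteratedDerivWithin j p (Set.Ici 0) t)
        atTop (nhds 0))
    (M : ℝ → ℝ) (hM : ∀ σ ∈ U, M σ = ∫ t in Set.Ioi (0 : ℝ), Real.exp (σ * t) * p t) :
    ∫ t in Set.Ioi (0 : ℝ),
        Real.exp (s * t) * t ^ k * iteratedDerivWithin l p (Set.Ici 0) t =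
      (-1 : ℝ) ^ l * iteratedDeriv k (fun σ => σ ^ l * M σ) s +
        ∑ m ∈ Finset.Icc (k + 1) l,
          (-1 : ℝ) ^ m * iteratedDerivWithin (l - m) p (Set.Ici 0) 0 *
            (((m - 1).factorial : ℝ) / ((m - k - 1).factorial : ℝ)) * s ^ (m - k - 1) := by
  have hUD : UniqueDiffOn ℝ (Set.Ici (0 : ℝ)) := uniqueDiffOn_Ici 0
  have hgcont : ∀ j ≤ l, ContinuousOn (iteratedDerivWithin j p (Set.Ici 0)) (Set.Ici 0) :=
    fun j hj => hp.continuousOn_iteratedDerivWithin (by exact_mod_cast hj) hUD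
  have hgdiff : ∀ j < l, ∀ t : ℝ, 0 < t →
      HasDerivAt (iteratedDerivWithin j p (Set.Ici 0))
        (iteratedDerivWithin (j + 1) p (Set.Ici 0) t) t := by
    intro j hj t ht
    have hnh : Set.Ici (0 : ℝ) ∈ nhds t := Ici_mem_nhds ht
    have hdw : DifferentiableWithinAt ℝ (iteratedDerivWithin j p (Set.Ici 0)) (Set.Ici 0) t :=
      hp.differentiableOn_iteratedDerivWithin (by exact_mod_cast hj) hUD t (le_of_lt ht)
    have hda : DifferentiableAt ℝ (iteratedDerivWithin j p (Set.Ici 0)) t :=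
      hdw.differentiableAt hnh
    have heq : iteratedDerivWithin (j + 1) p (Set.Ici 0) t
        = deriv (iteratedDerivWithin j p (Set.Ici 0)) t := by
      rw [iteratedDerivWithin_succ]
      exact derivWithin_of_mem_nhds hnh
    rw [heq]
    exact hda.hasDerivAt
  -- Step A: integration by parts
  have hIBP : ∀ j < l, ∀ σ ∈ U,
      (∫ t in Set.Ioi (0 : ℝ), Real.exp (σ * t) * iteratedDerivWithin (j + 1) p (Set.Ici 0) t)
        = -(iteratedDerivWithin j p (Set.Ici 0) 0)
          - σ * ∫ t in Set.Ioi (0 : ℝ),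
              Real.exp (σ * t) * iteratedDerivWithin j p (Set.Ici 0) t := by
    intro j hj σ hσ
    have hu : ∀ t ∈ Set.Ioi (0 : ℝ),
        HasDerivAt (fun t => Real.exp (σ * t)) (σ * Real.exp (σ * t)) t := by
      intro t _
      simpa [mul_comm] using ((hasDerivAt_id t).const_mul σ).exp
    have hv : ∀ t ∈ Set.Ioi (0 : ℝ),
        HasDerivAt (iteratedDerivWithin j p (Set.Ici 0))
          (iteratedDerivWithin (j + 1) p (Set.Ici 0) t) t :=
      fun t ht => hgdiff j hj t ht
    have huv' : IntegrableOn
        ((fun t => Real.exp (σ * t)) * fun t => iteratedDerivWithin (j + 1) p (Set.Ici 0) t)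
        (Set.Ioi 0) := by
      have h := hint (j + 1) (by omega) 0 (Nat.zero_le k) σ hσ
      simp only [pow_zero, one_mul] at h
      exact h
    have hu'v : IntegrableOn
        ((fun t => σ * Real.exp (σ * t)) * fun t => iteratedDerivWithin j p (Set.Ici 0) t)
        (Set.Ioi 0) := by
      have h := hint j (le_of_lt hj) 0 (Nat.zero_le k) σ hσ
      simp only [pow_zero, one_mul] at h
      have h2 := h.const_mul σ
      refine h2.congr (Filter.Eventually.of_forall fun t => ?_)
      simp only [Pi.mul_apply]
      ring
    have h_zero : Tendsto
        ((fun t => Real.exp (σ * t)) * fun t => iteratedDerivWithin j p (Set.Ici 0) t)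
        (nhdsWithin 0 (Set.Ioi 0)) (nhds (iteratedDerivWithin j p (Set.Ici 0) 0)) := by
      have hc : ContinuousWithinAt
          (fun t => Real.exp (σ * t) * iteratedDerivWithin j p (Set.Ici 0) t) (Set.Ici 0) 0 := by
        exact ((Real.continuous_exp.comp (continuous_const.mul continuous_id)).continuousWithinAt).mul
          ((hgcont j (le_of_lt hj)) 0 (Set.mem_Ici.mpr le_rfl))
      have := hc.tendsto.mono_left (nhdsWithin_mono 0 Set.Ioi_subset_Ici_self)
      simpa only [mul_zero, Real.exp_zero, one_mul, Pi.mul_def] using this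
    have h_infty : Tendsto
        ((fun t => Real.exp (σ * t)) * fun t => iteratedDerivWithin j p (Set.Ici 0) t)
        atTop (nhds 0) := by
      have h := hlim j (le_of_lt hj) 0 (Nat.zero_le k) σ hσ
      simp only [pow_zero, mul_one] at h
      exact h
    have key := integral_Ioi_mul_deriv_eq_deriv_mul hu hv huv' hu'v h_zero h_infty
    rw [key]
    have h2 : (∫ t in Set.Ioi (0 : ℝ), σ * Real.exp (σ * t) * iteratedDerivWithin j p (Set.Ici 0) t)
        = σ * ∫ t in Set.Ioi (0 : ℝ), Real.exp (σ * t) * iteratedDerivWithin j p (Set.Ici 0) t := by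
      rw [← integral_const_mul]
      congr 1; funext t; ring
    rw [h2]; ring

  -- Step B: closed form for the zeroth-power integral
  have hBrec : ∀ j ≤ l, ∀ σ ∈ U,
      (∫ t in Set.Ioi (0 : ℝ), Real.exp (σ * t) * iteratedDerivWithin j p (Set.Ici 0) t)
        = (-σ) ^ j * M σ + ∑ i ∈ Finset.range j,
            (-1 : ℝ) ^ (i + 1) * iteratedDerivWithin (j - 1 - i) p (Set.Ici 0) 0 * σ ^ i := by
    intro j
    induction j with
    | zero =>
      intro _ σ hσ
      simp [hM σ hσ, iteratedDerivWithin_zero]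
    | succ j ih =>
      intro hjl σ hσ
      rw [hIBP j (by omega) σ hσ, ih (by omega) σ hσ, Finset.sum_range_succ']
      simp only [show ∀ i : ℕ, j + 1 - 1 - (i + 1) = j - 1 - i from fun i => by omega,
        show j + 1 - 1 - 0 = j from by omega, pow_zero, mul_one, pow_one]
      have hsum2 : ∑ i ∈ Finset.range j,
          (-1 : ℝ) ^ (i + 1 + 1) * iteratedDerivWithin (j - 1 - i) p (Set.Ici 0) 0 * σ ^ (i + 1)
          = -(σ * ∑ i ∈ Finset.range j,
              (-1 : ℝ) ^ (i + 1) * iteratedDerivWithin (j - 1 - i) p (Set.Ici 0) 0 * σ ^ i) := by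
        rw [Finset.mul_sum, ← Finset.sum_neg_distrib]
        apply Finset.sum_congr rfl
        intro i _
        ring
      rw [hsum2]
      ring

  -- Step C: differentiation under the integral sign
  have hFd : ∀ j ≤ l, ∀ i < k, ∀ σ₀ ∈ U,
      HasDerivAt (fun σ => ∫ t in Set.Ioi (0 : ℝ),
          t ^ i * Real.exp (σ * t) * iteratedDerivWithin j p (Set.Ici 0) t)
        (∫ t in Set.Ioi (0 : ℝ),
          t ^ (i + 1) * Real.exp (σ₀ * t) * iteratedDerivWithin j p (Set.Ici 0) t) σ₀ := by
    intro j hj i hik σ₀ hσ₀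
    obtain ⟨ε, hε, hball⟩ := Metric.isOpen_iff.mp hU σ₀ hσ₀
    set δ := ε / 2 with hδdef
    have hδ : 0 < δ := by positivity
    have hδU : Metric.closedBall σ₀ δ ⊆ U :=
      (Metric.closedBall_subset_ball (by rw [hδdef]; linarith)).trans hball
    have hσ' : σ₀ + δ ∈ U := by
      apply hδU
      simp [Metric.mem_closedBall, Real.dist_eq, abs_of_nonneg hδ.le]
    have key := hasDerivAt_integral_of_dominated_loc_of_deriv_le
      (μ := volume.restrict (Set.Ioi (0 : ℝ))) (x₀ := σ₀)
      (F := fun σ t => t ^ i * Real.exp (σ * t) * iteratedDerivWithin j p (Set.Ici 0) t)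
      (F' := fun σ t => t ^ (i + 1) * Real.exp (σ * t) * iteratedDerivWithin j p (Set.Ici 0) t)
      (bound := fun t => t ^ (i + 1) * Real.exp ((σ₀ + δ) * t)
        * |iteratedDerivWithin j p (Set.Ici 0) t|)
      (Metric.ball_mem_nhds σ₀ hδ)
      (by
        filter_upwards [hU.mem_nhds hσ₀] with σ hσ
        exact (hint j hj i (le_of_lt hik) σ hσ).aestronglyMeasurable)
      (hint j hj i (le_of_lt hik) σ₀ hσ₀)
      (hint j hj (i + 1) hik σ₀ hσ₀).aestronglyMeasurable
      (by
        filter_upwards [ae_restrict_mem measurableSet_Ioi] with t ht σ hσ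
        have ht0 : (0 : ℝ) < t := ht
        have hσle : σ ≤ σ₀ + δ := by
          have := Metric.mem_ball.mp hσ
          rw [Real.dist_eq] at this
          have := abs_lt.mp this
          linarith [this.1, this.2]
        rw [Real.norm_eq_abs, abs_mul, abs_mul, abs_of_nonneg (pow_nonneg ht0.le (i + 1)),
          Real.abs_exp]
        gcongr)
      (by
        refine ((hint j hj (i + 1) hik (σ₀ + δ) hσ').abs).congr
          (Filter.EventuallyEq.symm ?_)
        filter_upwards [ae_restrict_mem measurableSet_Ioi] with t ht
        have ht0 : (0 : ℝ) < t := ht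
        rw [abs_mul, abs_mul, abs_of_nonneg (pow_nonneg ht0.le (i + 1)), Real.abs_exp])
      (by
        refine Filter.Eventually.of_forall fun t σ _ => ?_
        have hd : HasDerivAt (fun σ : ℝ => Real.exp (σ * t)) (Real.exp (σ * t) * t) σ :=
          (hasDerivAt_mul_const t).exp
        have := (hd.const_mul (t ^ i)).mul_const (iteratedDerivWithin j p (Set.Ici 0) t)
        refine this.congr_deriv ?_
        ring)
    exact key.2

  -- Step D: chain
  set G : ℕ → ℝ → ℝ := fun i σ =>
    (-1 : ℝ) ^ l * ((∫ t in Set.Ioi (0 : ℝ),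
        t ^ i * Real.exp (σ * t) * iteratedDerivWithin l p (Set.Ici 0) t)
      - ∑ m ∈ Finset.range l,
          (-1 : ℝ) ^ (m + 1) * iteratedDerivWithin (l - 1 - m) p (Set.Ici 0) 0 * Dfun i m σ)
    with hGdef
  have hGd : ∀ i < k, ∀ σ ∈ U, HasDerivAt (G i) (G (i + 1) σ) σ := by
    intro i hik σ hσ
    exact ((hFd l le_rfl i hik σ hσ).sub
      (HasDerivAt.fun_sum fun m _ => (Dfun_hasDerivAt i m σ).const_mul _)).const_mul _
  have hchain : iteratedDeriv k (G 0) s = G k s := my_chain U hU k G hGd s hsU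
  have hGeq : (fun σ => σ ^ l * M σ) =ᶠ[nhds s] G 0 := by
    have hneg1 : ((-1 : ℝ)) ^ l * (-1) ^ l = 1 := by
      rw [← pow_add, ← two_mul, pow_mul]; norm_num
    filter_upwards [hU.mem_nhds hsU] with σ hσ
    have hB := hBrec l le_rfl σ hσ
    show σ ^ l * M σ = G 0 σ
    rw [hGdef]
    simp only [Dfun_zero, pow_zero, one_mul]
    rw [hB, neg_pow]
    linear_combination (-(σ ^ l * M σ)) * hneg1

  have hiter : iteratedDeriv k (fun σ => σ ^ l * M σ) s = G k s :=
    (my_iteratedDeriv_congr_nhds hGeq k).trans hchain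
  -- final sum identity
  have hsum : ∑ m ∈ Finset.range l,
        (-1 : ℝ) ^ (m + 1) * iteratedDerivWithin (l - 1 - m) p (Set.Ici 0) 0 * Dfun k m s
      = ∑ m ∈ Finset.Icc (k + 1) l,
          (-1 : ℝ) ^ m * iteratedDerivWithin (l - m) p (Set.Ici 0) 0 *
            (((m - 1).factorial : ℝ) / ((m - k - 1).factorial : ℝ)) * s ^ (m - k - 1) := by
    have hs1 : ∑ m ∈ Finset.range l,
          (-1 : ℝ) ^ (m + 1) * iteratedDerivWithin (l - 1 - m) p (Set.Ici 0) 0 * Dfun k m s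
        = ∑ m ∈ Finset.Ico k l,
          (-1 : ℝ) ^ (m + 1) * iteratedDerivWithin (l - 1 - m) p (Set.Ici 0) 0 * Dfun k m s := by
      refine (Finset.sum_subset ?_ ?_).symm
      · intro x hx
        simp only [Finset.mem_Ico] at hx
        simp only [Finset.mem_range]
        omega
      · intro x hx hnx
        simp only [Finset.mem_range] at hx
        simp only [Finset.mem_Ico] at hnx
        have hnk : ¬ k ≤ x := by omega
        simp [Dfun, hnk]
    rw [hs1, show Finset.Icc (k + 1) l = Finset.Ico (k + 1) (l + 1) from
        (Finset.Ico_add_one_right_eq_Icc _ _).symm,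
      Finset.sum_Ico_eq_sum_range, Finset.sum_Ico_eq_sum_range,
      show l + 1 - (k + 1) = l - k from by omega]
    apply Finset.sum_congr rfl
    intro i _
    have h1 : Dfun k (k + i) s = (((k + i).factorial : ℝ) / (i.factorial : ℝ)) * s ^ i := by
      simp [Dfun, show k ≤ k + i from Nat.le_add_right k i, show k + i - k = i from by omega]
    rw [h1, show k + 1 + i - 1 = k + i from by omega, show k + 1 + i - k - 1 = i from by omega,
      show l - (k + 1 + i) = l - 1 - (k + i) from by omega,
      show k + 1 + i = k + i + 1 from by omega]
    ring

  have hsw : (∫ t in Set.Ioi (0 : ℝ),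
        Real.exp (s * t) * t ^ k * iteratedDerivWithin l p (Set.Ici 0) t)
      = ∫ t in Set.Ioi (0 : ℝ),
        t ^ k * Real.exp (s * t) * iteratedDerivWithin l p (Set.Ici 0) t := by
    congr 1; funext t; ring
  rw [hsw, hiter, ← hsum, hGdef]
  have hneg : ((-1 : ℝ)) ^ l * (-1) ^ l = 1 := by
    rw [← pow_add, ← two_mul, pow_mul]; norm_num
  set X := ∫ t in Set.Ioi (0 : ℝ),
    t ^ k * Real.exp (s * t) * iteratedDerivWithin l p (Set.Ici 0) t with hX
  set Y := ∑ m ∈ Finset.range l,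
    (-1 : ℝ) ^ (m + 1) * iteratedDerivWithin (l - 1 - m) p (Set.Ici 0) 0 * Dfun k m s with hY
  rw [← mul_assoc, hneg, one_mul]
  ring
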